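/- Let α ∈ ℝ be irrational and ψ: (0,∞) → (0,∞) decreasing such that the inequality |α − u/v| < ψ(v)/v has only finitely many solutions in pairs of odd integers u, v with v ≥ 1. Then there exists c > 0 such that c · (ψ(t/π + 1))² ≤ |1 + (e^{it} + e^{itα})/2| for all t ≥ 0. -/

import Mathlib

open Real

private lemma cos_term_bound (y : ℝ) (v : ℤ) (hv : Odd v) (h : |y - v| ≤ 1) :
    (y - (v : ℝ)) ^ 2 ≤ (1 + Real.cos (Real.pi * y)) / 2 := by
  have hπ : (0:ℝ) < Real.pi := Real.pi_pos
  have hkey : Real.cos (Real.pi * y) = - Real.cos (Real.pi * (y - v)) := by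
    have := Real.cos_add_int_mul_pi (Real.pi * (y - v)) v
    rw [hv.neg_one_zpow] at this
    have h2 : Real.pi * (y - v) + v * Real.pi = Real.pi * y := by ring
    rw [h2] at this
    linarith [this]
  have habs : |Real.pi * (y - v)| ≤ Real.pi := by
    rw [abs_mul, abs_of_pos hπ]
    nlinarith
  have := Real.cos_le_one_sub_mul_cos_sq habs
  rw [hkey]
  have hπ2 : (0:ℝ) < Real.pi ^ 2 := by positivity
  have h3 : 2 / Real.pi ^ 2 * (Real.pi * (y - v)) ^ 2 = 2 * (y - v)^2 := by
    field_simp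
  nlinarith [this]

set_option maxHeartbeats 1000000 in
/-- If `α` is irrational and the inequality `|α - u/v| < ψ(v)/v` has only finitely many
solutions in odd integers `u, v` with `v ≥ 1`, then `g(t) = |1 + (e^{it} + e^{itα})/2|`
is bounded below by `c (ψ(t/π + 1))²` for all `t ≥ 0`. -/
theorem g_lower_bound_of_finitely_many_oddOdd (α : ℝ) (hα : Irrational α) (ψ : ℝ → ℝ)
    (hψpos : ∀ t : ℝ, 0 < t → 0 < ψ t) (hψdec : AntitoneOn ψ (Set.Ioi 0))
    (hfin : {p : ℤ × ℤ | Odd p.1 ∧ Odd p.2 ∧ 1 ≤ p.2 ∧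
        |α - (p.1 : ℝ) / (p.2 : ℝ)| < ψ (p.2 : ℝ) / (p.2 : ℝ)}.Finite) :
    ∃ c : ℝ, 0 < c ∧ ∀ t : ℝ, 0 ≤ t →
      c * (ψ (t / Real.pi + 1)) ^ 2
        ≤ ‖1 + (Complex.exp ((t : ℂ) * Complex.I)
            + Complex.exp ((t : ℂ) * (α : ℂ) * Complex.I)) / 2‖ := by
  classical
  have hπ : (0:ℝ) < Real.pi := Real.pi_pos
  set S := {p : ℤ × ℤ | Odd p.1 ∧ Odd p.2 ∧ 1 ≤ p.2 ∧
      |α - (p.1 : ℝ) / (p.2 : ℝ)| < ψ (p.2 : ℝ) / (p.2 : ℝ)} with hS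
  set F : Finset (ℤ × ℤ) := insert ((3:ℤ), (1:ℤ)) hfin.toFinset with hF
  have hFne : F.Nonempty := ⟨_, Finset.mem_insert_self _ _⟩
  set δ : ℝ := F.inf' hFne (fun p => |(p.2 : ℝ) * α - p.1|) with hδ
  have hδpos : 0 < δ := by
    rw [hδ, Finset.lt_inf'_iff]
    intro p hp
    rw [hF, Finset.mem_insert] at hp
    have hp2 : p.2 ≠ 0 := by
      rcases hp with rfl | hp
      · norm_num
      · have := (hfin.mem_toFinset.mp hp).2.2.1
        omega
    have : Irrational ((p.2 : ℝ) * α) := hα.intCast_mul hp2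
    have := sub_ne_zero.mpr (this.ne_int p.1)
    exact abs_pos.mpr this
  -- key number-theoretic bound
  have hNT : ∀ u v : ℤ, Odd u → Odd v → 1 ≤ v → min δ (ψ v) ≤ |(v:ℝ) * α - u| := by
    intro u v hu hv hv1
    by_cases hmem : (u, v) ∈ S
    · refine le_trans (min_le_left _ _) ?_
      exact Finset.inf'_le _ (Finset.mem_insert_of_mem (hfin.mem_toFinset.mpr hmem))
    · refine le_trans (min_le_right _ _) ?_
      have hvpos : (0:ℝ) < (v:ℝ) := by exact_mod_cast hv1
      have hnlt : ¬ (|α - (u : ℝ) / (v : ℝ)| < ψ (v : ℝ) / (v : ℝ)) := by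
        intro h
        exact hmem ⟨hu, hv, hv1, h⟩
      push_neg at hnlt
      have h1 : |(v:ℝ) * α - u| = (v:ℝ) * |α - (u:ℝ)/(v:ℝ)| := by
        rw [show (v:ℝ) * α - u = (v:ℝ) * (α - (u:ℝ)/(v:ℝ)) by field_simp, abs_mul,
          abs_of_pos hvpos]
      calc ψ (v:ℝ) = ψ (v:ℝ) / (v:ℝ) * (v:ℝ) := by field_simp
        _ ≤ |α - (u:ℝ)/(v:ℝ)| * v := mul_le_mul_of_nonneg_right hnlt hvpos.le
        _ = |(v:ℝ) * α - u| := by rw [h1]; ring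
  have hψ1 : 0 < ψ 1 := hψpos 1 one_pos
  set m : ℝ := min 1 (δ / ψ 1) with hm
  have hmpos : 0 < m := lt_min one_pos (by positivity)
  refine ⟨m ^ 2 / (2 * (1 + |α|) ^ 2), by positivity, ?_⟩
  intro t ht
  set x : ℝ := t / Real.pi with hx
  have hx0 : 0 ≤ x := by positivity
  have hπx : Real.pi * x = t := by rw [hx]; field_simp
  -- nearest odd integers
  set v : ℤ := 2 * round ((x - 1) / 2) + 1 with hv
  set u : ℤ := 2 * round ((x * α - 1) / 2) + 1 with hu
  have hvodd : Odd v := ⟨_, by ring⟩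
  have huodd : Odd u := ⟨_, by ring⟩
  have hd1 : |x - v| ≤ 1 := by
    have := abs_sub_round ((x - 1) / 2)
    rw [hv]
    push_cast
    rw [abs_le] at this ⊢
    constructor <;> nlinarith [this.1, this.2]
  have hd2 : |x * α - u| ≤ 1 := by
    have := abs_sub_round ((x * α - 1) / 2)
    rw [hu]
    push_cast
    rw [abs_le] at this ⊢
    constructor <;> nlinarith [this.1, this.2]
  have hv1 : 1 ≤ v := by
    have h1 : round ((x - 1) / 2) = ⌊x / 2⌋ := by
      rw [round_eq]; congr 1; ring
    have h2 : (0:ℤ) ≤ ⌊x / 2⌋ := by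
      rw [Int.le_floor]; push_cast; linarith
    omega
  -- lower bound on |z| via real part
  set z : ℂ := 1 + (Complex.exp ((t : ℂ) * Complex.I)
      + Complex.exp ((t : ℂ) * (α : ℂ) * Complex.I)) / 2 with hz
  have hre : z.re = 1 + (Real.cos t + Real.cos (t * α)) / 2 := by
    have e1 : Complex.exp ((t:ℂ) * (α:ℂ) * Complex.I)
        = Complex.exp (((t * α : ℝ):ℂ) * Complex.I) := by norm_cast
    rw [hz, e1]
    simp only [Complex.add_re, Complex.one_re, Complex.div_ofNat_re,
      Complex.exp_ofReal_mul_I_re]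
  have habs : z.re ≤ ‖z‖ := Complex.re_le_norm z
  have hcos1 : (x - (v:ℝ))^2 ≤ (1 + Real.cos t) / 2 := by
    rw [← hπx]
    exact cos_term_bound x v hvodd hd1
  have hcos2 : (x * α - (u:ℝ))^2 ≤ (1 + Real.cos (t * α)) / 2 := by
    have : t * α = Real.pi * (x * α) := by rw [← hπx]; ring
    rw [this]
    exact cos_term_bound (x * α) u huodd hd2
  have hglb : (x - (v:ℝ))^2 + (x * α - (u:ℝ))^2 ≤ ‖z‖ := by
    calc (x - (v:ℝ))^2 + (x * α - (u:ℝ))^2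
        ≤ (1 + Real.cos t)/2 + (1 + Real.cos (t*α))/2 := by linarith
      _ = z.re := by rw [hre]; ring
      _ ≤ ‖z‖ := habs
  -- ψ comparison
  have hvx : (v:ℝ) ≤ x + 1 := by
    have := abs_le.mp hd1
    linarith [this.1]
  have hvpos : (0:ℝ) < (v:ℝ) := by exact_mod_cast hv1
  have hψv : ψ (x + 1) ≤ ψ (v:ℝ) := hψdec (Set.mem_Ioi.mpr hvpos) (Set.mem_Ioi.mpr (by linarith)) hvx
  have hψx1 : ψ (x + 1) ≤ ψ 1 :=
    hψdec (Set.mem_Ioi.mpr one_pos) (Set.mem_Ioi.mpr (by linarith)) (by linarith)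
  have hψx1pos : 0 < ψ (x + 1) := hψpos _ (by linarith)
  have hmin : m * ψ (x + 1) ≤ min δ (ψ (x + 1)) := by
    rcases le_total δ (ψ (x+1)) with h | h
    · rw [min_eq_left h]
      calc m * ψ (x+1) ≤ (δ / ψ 1) * ψ (x+1) :=
            mul_le_mul_of_nonneg_right (min_le_right _ _) hψx1pos.le
        _ ≤ (δ / ψ 1) * ψ 1 := by
            apply mul_le_mul_of_nonneg_left hψx1 (by positivity)
        _ = δ := by field_simp
    · rw [min_eq_right h]
      nlinarith [min_le_left (1:ℝ) (δ / ψ 1)]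
  have hchain : min δ (ψ (x + 1)) ≤ (1 + |α|) * (|x - v| + |x * α - u|) := by
    have h1 : min δ (ψ (x+1)) ≤ min δ (ψ (v:ℝ)) := le_min (min_le_left _ _)
      (le_trans (min_le_right _ _) hψv)
    have h2 := hNT u v huodd hvodd hv1
    have h3 : |(v:ℝ) * α - u| ≤ |α| * |x - v| + |x * α - u| := by
      have : (v:ℝ) * α - u = (α * (v - x)) + (x * α - u) := by ring
      rw [this]
      calc |(α * ((v:ℝ) - x)) + (x * α - u)| ≤ |α * ((v:ℝ) - x)| + |x * α - u| := abs_add_le _ _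
        _ = |α| * |x - v| + |x * α - u| := by rw [abs_mul, abs_sub_comm]
    have h4 : |α| * |x - v| + |x * α - u| ≤ (1 + |α|) * (|x - v| + |x * α - u|) := by
      have := abs_nonneg (x - (v:ℝ))
      have := abs_nonneg (x * α - (u:ℝ))
      have := abs_nonneg α
      nlinarith
    linarith
  -- combine
  have hfinal : m * ψ (x + 1) ≤ (1 + |α|) * (|x - v| + |x * α - u|) := le_trans hmin hchain
  have hLpos : 0 ≤ m * ψ (x + 1) := by positivity
  have hsq : (m * ψ (x + 1))^2 ≤ ((1 + |α|) * (|x - v| + |x * α - u|))^2 := by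
    apply sq_le_sq' _ hfinal
    nlinarith [abs_nonneg (x - (v:ℝ)), abs_nonneg (x * α - (u:ℝ)), abs_nonneg α]
  have hsum : ((1 + |α|) * (|x - v| + |x * α - u|))^2
      ≤ 2 * (1 + |α|)^2 * ((x - (v:ℝ))^2 + (x * α - (u:ℝ))^2) := by
    have e1 : |x - (v:ℝ)|^2 = (x - (v:ℝ))^2 := sq_abs _
    have e2 : |x * α - (u:ℝ)|^2 = (x * α - (u:ℝ))^2 := sq_abs _
    nlinarith [sq_nonneg (|x - (v:ℝ)| - |x * α - (u:ℝ)|), abs_nonneg α]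
  have h2a : (0:ℝ) < 2 * (1 + |α|)^2 := by positivity
  have hkey : (m * ψ (x + 1))^2 ≤ 2 * (1 + |α|)^2 * ((x - (v:ℝ))^2 + (x * α - (u:ℝ))^2) :=
    le_trans hsq hsum
  calc m ^ 2 / (2 * (1 + |α|) ^ 2) * ψ (t / Real.pi + 1) ^ 2
      = (m * ψ (x + 1))^2 / (2 * (1 + |α|)^2) := by rw [hx]; ring
    _ ≤ (x - (v:ℝ))^2 + (x * α - (u:ℝ))^2 := by
        rw [div_le_iff₀ h2a]
        exact le_of_le_of_eq hkey (by ring)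
    _ ≤ ‖z‖ := hglb
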